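/- Let F : I → ℝ>0 and H : I → ℝ be differentiable functions on an open interval I ⊆ ℝ satisfying F' = F·H and H' ≥ 2ε·F^{-2} − 2H² for some ε > 0. Then H vanishes at most once on I; moreover if H(t₀) = 0 then H'(t₀) > 0, H < 0 on I ∩ (−∞,t₀) and H > 0 on I ∩ (t₀,∞), so t₀ is a global minimum of F. -/

import Mathlib

open Filter Topology

/-- If `H` has positive derivative at `t₁`, then near `t₁` the function crosses `H t₁`. -/
lemma near_of_deriv_pos (H : ℝ → ℝ) (d t₁ : ℝ) (hd : HasDerivAt H d t₁) (hpos : 0 < d) :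
    ∃ δ > 0, ∀ s, dist s t₁ < δ →
      (t₁ < s → H t₁ < H s) ∧ (s < t₁ → H s < H t₁) := by
  have hs := hasDerivAt_iff_tendsto_slope.mp hd
  have h2 : ∀ᶠ s in 𝓝[≠] t₁, 0 < slope H t₁ s := hs.eventually (eventually_gt_nhds hpos)
  rw [eventually_nhdsWithin_iff, Metric.eventually_nhds_iff] at h2
  obtain ⟨δ, hδ, h⟩ := h2
  refine ⟨δ, hδ, fun s hs' => ⟨fun hlt => ?_, fun hlt => ?_⟩⟩
  · have h0 := h hs' (by simp [Set.mem_compl_iff]; exact (ne_of_gt hlt))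
    rw [slope_def_field] at h0
    rcases div_pos_iff.mp h0 with ⟨h1, _⟩ | ⟨_, h2⟩ <;> linarith
  · have h0 := h hs' (by simp [Set.mem_compl_iff]; exact (ne_of_lt hlt))
    rw [slope_def_field] at h0
    rcases div_pos_iff.mp h0 with ⟨_, h2⟩ | ⟨h1, _⟩ <;> linarith

lemma aux_after (I : Set ℝ) (hIc : I.OrdConnected)
    (F H H' : ℝ → ℝ) (ε : ℝ) (hε : 0 < ε)
    (hFpos : ∀ t ∈ I, 0 < F t)
    (hH : ∀ t ∈ I, HasDerivAt H (H' t) t)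
    (hineq : ∀ t ∈ I, 2 * ε / (F t) ^ 2 - 2 * (H t) ^ 2 ≤ H' t)
    (t₀ : ℝ) (ht₀ : t₀ ∈ I) (hz : H t₀ = 0) :
    ∀ t ∈ I, t₀ < t → 0 < H t := by
  have hder_pos : ∀ s ∈ I, H s = 0 → 0 < H' s := by
    intro s hs h0
    have h1 := hineq s hs
    have h2 : (0:ℝ) < 2 * ε / (F s) ^ 2 := by
      have := hFpos s hs; positivity
    rw [h0] at h1; nlinarith
  intro t ht hlt
  by_contra hcon
  push_neg at hcon
  have hsub : Set.Icc t₀ t ⊆ I := hIc.out ht₀ ht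
  set S := {s | s ∈ Set.Ioc t₀ t ∧ H s ≤ 0} with hSdef
  have htS : t ∈ S := ⟨⟨hlt, le_refl t⟩, hcon⟩
  have hne : S.Nonempty := ⟨t, htS⟩
  have hbdd : BddBelow S := ⟨t₀, fun s hs => hs.1.1.le⟩
  set t₁ := sInf S with ht₁def
  have ht₁t : t₁ ≤ t := csInf_le hbdd htS
  have ht₁0 : t₀ ≤ t₁ := le_csInf hne fun s hs => hs.1.1.le
  obtain ⟨δ, hδ, hnear⟩ := near_of_deriv_pos H (H' t₀) t₀ (hH t₀ ht₀) (hder_pos t₀ ht₀ hz)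
  have hlb : ∀ s ∈ S, t₀ + δ ≤ s := by
    intro s hs
    by_contra hc
    push_neg at hc
    have h1 : dist s t₀ < δ := by
      rw [Real.dist_eq, abs_lt]; exact ⟨by linarith [hs.1.1], by linarith⟩
    have h2 := (hnear s h1).1 hs.1.1
    rw [hz] at h2; linarith [hs.2]
  have ht₀1 : t₀ < t₁ := lt_of_lt_of_le (by linarith) (le_csInf hne hlb)
  have ht₁I : t₁ ∈ I := hsub ⟨ht₁0, ht₁t⟩
  have hmid : ∀ s, t₀ < s → s < t₁ → 0 < H s := by
    intro s h1 h2
    by_contra hc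
    push_neg at hc
    have hmem : s ∈ S := ⟨⟨h1, le_trans h2.le ht₁t⟩, hc⟩
    exact absurd (csInf_le hbdd hmem) (not_le.mpr h2)
  have hcont : ContinuousAt H t₁ := (hH t₁ ht₁I).continuousAt
  have hle : H t₁ ≤ 0 := by
    by_contra hc
    push_neg at hc
    have hev : ∀ᶠ s in 𝓝 t₁, 0 < H s := hcont.eventually (eventually_gt_nhds hc)
    rw [Metric.eventually_nhds_iff] at hev
    obtain ⟨η, hη, hev⟩ := hev
    obtain ⟨s, hsS, hslt⟩ := exists_lt_of_csInf_lt hne (show t₁ < t₁ + η by linarith)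
    have hd : dist s t₁ < η := by
      rw [Real.dist_eq, abs_lt]
      exact ⟨by linarith [csInf_le hbdd hsS], by linarith⟩
    exact absurd (hev hd) (not_lt.mpr hsS.2)
  have hge : 0 ≤ H t₁ := by
    by_contra hc
    push_neg at hc
    have hev : ∀ᶠ s in 𝓝 t₁, H s < 0 := hcont.eventually (eventually_lt_nhds hc)
    rw [Metric.eventually_nhds_iff] at hev
    obtain ⟨η, hη, hev⟩ := hev
    have h1 : max t₀ (t₁ - η) < t₁ := max_lt ht₀1 (by linarith)
    set s := (max t₀ (t₁ - η) + t₁) / 2 with hsdef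
    have hs0 : max t₀ (t₁ - η) < s := by rw [hsdef]; linarith
    have hs1 : t₀ < s := lt_of_le_of_lt (le_max_left _ _) hs0
    have hs3 : t₁ - η < s := lt_of_le_of_lt (le_max_right _ _) hs0
    have hs2 : s < t₁ := by rw [hsdef]; linarith
    have hd : dist s t₁ < η := by rw [Real.dist_eq, abs_lt]; exact ⟨by linarith, by linarith⟩
    exact absurd (hmid s hs1 hs2) (not_lt.mpr (hev hd).le)
  have hz1 : H t₁ = 0 := le_antisymm hle hge
  obtain ⟨δ₂, hδ₂, hnear₂⟩ := near_of_deriv_pos H (H' t₁) t₁ (hH t₁ ht₁I) (hder_pos t₁ ht₁I hz1)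
  have h1 : max t₀ (t₁ - δ₂) < t₁ := max_lt ht₀1 (by linarith)
  set s := (max t₀ (t₁ - δ₂) + t₁) / 2 with hsdef
  have hs0 : max t₀ (t₁ - δ₂) < s := by rw [hsdef]; linarith
  have hs1 : t₀ < s := lt_of_le_of_lt (le_max_left _ _) hs0
  have hs3 : t₁ - δ₂ < s := lt_of_le_of_lt (le_max_right _ _) hs0
  have hs2 : s < t₁ := by rw [hsdef]; linarith
  have hd : dist s t₁ < δ₂ := by rw [Real.dist_eq, abs_lt]; exact ⟨by linarith, by linarith⟩
  have h2 := (hnear₂ s hd).2 hs2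
  rw [hz1] at h2
  exact absurd (hmid s hs1 hs2) (not_lt.mpr h2.le)

/-- If `F > 0` and `H` on an open interval `I` satisfy `F' = F·H` and
`H' ≥ 2ε F⁻² − 2H²` with `ε > 0`, then `H` vanishes at most once; at a zero `t₀` of `H` one has
`H'(t₀) > 0`, `H < 0` before `t₀`, `H > 0` after `t₀`, and `t₀` is a global minimum of `F`. -/
theorem stmt_11 (I : Set ℝ) (hIo : IsOpen I) (hIc : I.OrdConnected)
    (F H H' : ℝ → ℝ) (ε : ℝ) (hε : 0 < ε)
    (hFpos : ∀ t ∈ I, 0 < F t)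
    (hF : ∀ t ∈ I, HasDerivAt F (F t * H t) t)
    (hH : ∀ t ∈ I, HasDerivAt H (H' t) t)
    (hineq : ∀ t ∈ I, 2 * ε / (F t) ^ 2 - 2 * (H t) ^ 2 ≤ H' t) :
    (∀ s ∈ I, ∀ t ∈ I, H s = 0 → H t = 0 → s = t) ∧
    (∀ t₀ ∈ I, H t₀ = 0 →
      0 < H' t₀ ∧ (∀ t ∈ I, t < t₀ → H t < 0) ∧ (∀ t ∈ I, t₀ < t → 0 < H t) ∧
      ∀ t ∈ I, F t₀ ≤ F t) := by
  -- reflected data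
  set J : Set ℝ := Neg.neg ⁻¹' I with hJdef
  have hJc : J.OrdConnected :=
    ⟨fun a ha b hb x hx => hIc.out hb ha ⟨neg_le_neg hx.2, neg_le_neg hx.1⟩⟩
  have hmemJ : ∀ s : ℝ, s ∈ J ↔ -s ∈ I := fun s => Iff.rfl
  have hHneg : ∀ s ∈ J, HasDerivAt (fun u => -H (-u)) (H' (-s)) s := by
    intro s hs
    have h1 : HasDerivAt (fun u : ℝ => H (-u)) (H' (-s) * (-1)) s :=
      HasDerivAt.comp s (hH (-s) hs) ((hasDerivAt_id s).neg)
    have h2 := h1.neg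
    rw [show H' (-s) = -(H' (-s) * -1) by ring]; exact h2
  have hafter_neg : ∀ t₀ ∈ I, H t₀ = 0 → ∀ t ∈ I, t < t₀ → H t < 0 := by
    intro t₀ ht₀ hz t ht hlt
    have key := aux_after J hJc (fun u => F (-u)) (fun u => -H (-u)) (fun u => H' (-u)) ε hε
      (fun s hs => hFpos (-s) hs) (fun s hs => hHneg s hs)
      (fun s hs => by simpa using hineq (-s) hs)
      (-t₀) (by simp only [hJdef, Set.mem_preimage, neg_neg]; exact ht₀) (by simp [hz])
    have h1 := key (-t) (by simp only [hJdef, Set.mem_preimage, neg_neg]; exact ht) (by linarith)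
    simp only [neg_neg] at h1
    linarith
  have hafter : ∀ t₀ ∈ I, H t₀ = 0 → ∀ t ∈ I, t₀ < t → 0 < H t :=
    fun t₀ ht₀ hz => aux_after I hIc F H H' ε hε hFpos hH hineq t₀ ht₀ hz
  constructor
  · intro s hs t ht h1 h2
    rcases lt_trichotomy s t with h | h | h
    · exact absurd (hafter s hs h1 t ht h) (by rw [h2]; exact lt_irrefl 0)
    · exact h
    · exact absurd (hafter t ht h2 s hs h) (by rw [h1]; exact lt_irrefl 0)
  · intro t₀ ht₀ hz
    have hder : 0 < H' t₀ := by
      have h1 := hineq t₀ ht₀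
      have h2 : (0:ℝ) < 2 * ε / (F t₀) ^ 2 := by
        have := hFpos t₀ ht₀; positivity
      rw [hz] at h1; nlinarith
    refine ⟨hder, hafter_neg t₀ ht₀ hz, hafter t₀ ht₀ hz, ?_⟩
    intro t ht
    rcases lt_trichotomy t t₀ with h | h | h
    · -- F strictly decreasing on [t, t₀]
      have hsub : Set.Icc t t₀ ⊆ I := hIc.out ht ht₀
      have hanti : StrictAntiOn F (Set.Icc t t₀) := by
        apply strictAntiOn_of_deriv_neg (convex_Icc t t₀)
        · exact fun x hx => ((hF x (hsub hx)).continuousAt).continuousWithinAt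
        · intro x hx
          rw [interior_Icc] at hx
          have hxI : x ∈ I := hsub ⟨hx.1.le, hx.2.le⟩
          rw [(hF x hxI).deriv]
          have hHn := hafter_neg t₀ ht₀ hz x hxI hx.2
          have := hFpos x hxI
          nlinarith
      exact (hanti ⟨le_refl t, h.le⟩ ⟨h.le, le_refl t₀⟩ h).le
    · rw [h]
    · have hsub : Set.Icc t₀ t ⊆ I := hIc.out ht₀ ht
      have hmono : StrictMonoOn F (Set.Icc t₀ t) := by
        apply strictMonoOn_of_deriv_pos (convex_Icc t₀ t)
        · exact fun x hx => ((hF x (hsub hx)).continuousAt).continuousWithinAt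
        · intro x hx
          rw [interior_Icc] at hx
          have hxI : x ∈ I := hsub ⟨hx.1.le, hx.2.le⟩
          rw [(hF x hxI).deriv]
          have hHp := hafter t₀ ht₀ hz x hxI hx.1
          have := hFpos x hxI
          nlinarith
      exact (hmono ⟨le_refl t₀, h.le⟩ ⟨h.le, le_refl t⟩ h).le
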